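/- arXiv:1311.5618 — 2 statements merged into one kernel-verified Lean document; each statement's English description precedes it below -/
import Mathlib

section
/- Let k be an algebraically closed field of characteristic zero, let L be a locally finite dimensional Lie algebra over k, and let V be an integrable, faithful L-module. If L stabilizes a maximal generalized flag in V (i.e., there is a maximal generalized flag 𝔉 in V with x·F ⊆ F for all x ∈ L and all F ∈ 𝔉), then L is locally solvable. -/
/-- `F''` is the immediate successor of `F'` within the set of subspaces `𝔉`. -/
def IsImmediateSucc {k V : Type*} [Field k] [AddCommGroup V] [Module k V]
    (𝔉 : Set (Submodule k V)) (F' F'' : Submodule k V) : Prop :=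
  F' ∈ 𝔉 ∧ F'' ∈ 𝔉 ∧ F' < F'' ∧ ∀ G ∈ 𝔉, ¬(F' < G ∧ G < F'')

namespace FlagAux

variable {k L V : Type*} [Field k]
  [LieRing L] [LieAlgebra k L]
  [AddCommGroup V] [Module k V] [LieRingModule L V] [LieModule k L V]

/-- Every element of `F''` is congruent mod `F'` to a multiple of a fixed generator. -/
lemma exists_gen (F' F'' : Submodule k V)
    (h1 : Module.finrank k (F'' ⧸ (F'.comap F''.subtype)) = 1) :
    ∃ w₀ ∈ F'', w₀ ∉ F' ∧ ∀ u ∈ F'', ∃ c : k, u - c • w₀ ∈ F' := by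
  obtain ⟨v, hv0, hv⟩ := finrank_eq_one_iff'.mp h1
  obtain ⟨u₀, rfl⟩ := Submodule.Quotient.mk_surjective _ v
  refine ⟨(u₀ : V), u₀.2, ?_, ?_⟩
  · intro h
    exact hv0 ((Submodule.Quotient.mk_eq_zero _).mpr h)
  · intro u hu
    obtain ⟨c, hc⟩ := hv (Submodule.Quotient.mk ⟨u, hu⟩)
    have hc' : Submodule.Quotient.mk (p := F'.comap F''.subtype) (c • u₀) =
        Submodule.Quotient.mk ⟨u, hu⟩ := by
      rw [Submodule.Quotient.mk_smul]; exact hc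
    have hmem := (Submodule.Quotient.eq _).mp hc'
    have hmem' : c • (u₀ : V) - u ∈ F' := hmem
    refine ⟨c, ?_⟩
    have := F'.neg_mem hmem'
    simpa [neg_sub] using this

lemma exists_scalar (F' F'' : Submodule k V)
    (h1 : Module.finrank k (F'' ⧸ (F'.comap F''.subtype)) = 1) (x : L)
    (hx' : ∀ v ∈ F', ⁅x, v⁆ ∈ F') (hx'' : ∀ v ∈ F'', ⁅x, v⁆ ∈ F'') :
    ∃ e : k, ∀ u ∈ F'', ⁅x, u⁆ - e • u ∈ F' := by
  obtain ⟨w₀, hw₀'', hw₀', hgen⟩ := exists_gen F' F'' h1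
  obtain ⟨e, he⟩ := hgen ⁅x, w₀⁆ (hx'' w₀ hw₀'')
  refine ⟨e, fun u hu => ?_⟩
  obtain ⟨c, hc⟩ := hgen u hu
  have key : ⁅x, u⁆ - e • u =
      (⁅x, u - c • w₀⁆ - e • (u - c • w₀)) + c • (⁅x, w₀⁆ - e • w₀) := by
    rw [lie_sub, lie_smul]; module
  rw [key]
  exact F'.add_mem (F'.sub_mem (hx' _ hc) (F'.smul_mem _ hc)) (F'.smul_mem _ he)

lemma comm_mem (F' F'' : Submodule k V)
    (h1 : Module.finrank k (F'' ⧸ (F'.comap F''.subtype)) = 1) (x y : L)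
    (hx' : ∀ v ∈ F', ⁅x, v⁆ ∈ F') (hx'' : ∀ v ∈ F'', ⁅x, v⁆ ∈ F'')
    (hy' : ∀ v ∈ F', ⁅y, v⁆ ∈ F') (hy'' : ∀ v ∈ F'', ⁅y, v⁆ ∈ F'') :
    ∀ u ∈ F'', ⁅⁅x, y⁆, u⁆ ∈ F' := by
  obtain ⟨e, he⟩ := exists_scalar F' F'' h1 x hx' hx''
  obtain ⟨f, hf⟩ := exists_scalar F' F'' h1 y hy' hy''
  intro u hu
  have h1x : ⁅x, ⁅y, u⁆⁆ - (e * f) • u ∈ F' := by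
    have a := he ⁅y, u⁆ (hy'' u hu)
    have b := F'.smul_mem e (hf u hu)
    have key : ⁅x, ⁅y, u⁆⁆ - (e * f) • u =
        (⁅x, ⁅y, u⁆⁆ - e • ⁅y, u⁆) + e • (⁅y, u⁆ - f • u) := by module
    rw [key]; exact F'.add_mem a b
  have h1y : ⁅y, ⁅x, u⁆⁆ - (e * f) • u ∈ F' := by
    have a := hf ⁅x, u⁆ (hx'' u hu)
    have b := F'.smul_mem f (he u hu)
    have key : ⁅y, ⁅x, u⁆⁆ - (e * f) • u =
        (⁅y, ⁅x, u⁆⁆ - f • ⁅x, u⁆) + f • (⁅x, u⁆ - e • u) := by module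
    rw [key]; exact F'.add_mem a b
  have key : ⁅⁅x, y⁆, u⁆ =
      (⁅x, ⁅y, u⁆⁆ - (e * f) • u) - (⁅y, ⁅x, u⁆⁆ - (e * f) • u) := by
    rw [lie_lie]; module
  rw [key]; exact F'.sub_mem h1x h1y

lemma succ_le_of_mem {𝔉 : Set (Submodule k V)} (hch : IsChain (· ≤ ·) 𝔉)
    {F' F'' F₀ : Submodule k V} (hp : IsImmediateSucc 𝔉 F' F'') (hF₀ : F₀ ∈ 𝔉)
    {u : V} (hu : u ∈ F₀) (hu' : u ∉ F') : F'' ≤ F₀ := by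
  rcases hch.total hp.2.1 hF₀ with h | h
  · exact h
  · by_contra hne
    have hlt2 : F₀ < F'' := lt_of_le_of_ne h (fun he => hne (he ▸ le_rfl))
    have hlt1 : F' < F₀ := by
      rcases hch.total hp.1 hF₀ with h' | h'
      · exact lt_of_le_of_ne h' (fun he => hu' (he ▸ hu))
      · exact absurd (h' hu) hu'
    exact hp.2.2.2 F₀ hF₀ ⟨hlt1, hlt2⟩

/-- The kernel of the action of `L` on a subspace `W`. -/
def kerOn (W : Submodule k V) : Submodule k L where
  carrier := {x : L | ∀ w ∈ W, ⁅x, w⁆ = 0}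
  add_mem' := fun ha hb w hw => by rw [add_lie, ha w hw, hb w hw, add_zero]
  zero_mem' := fun w hw => zero_lie w
  smul_mem' := fun c x hx w hw => by rw [smul_lie, hx w hw, smul_zero]

lemma mem_kerOn {W : Submodule k V} {x : L} :
    x ∈ kerOn (L := L) W ↔ ∀ w ∈ W, ⁅x, w⁆ = 0 := Iff.rfl

end FlagAux

/-- A generalized flag in `V`. -/
def IsGeneralizedFlag {k V : Type*} [Field k] [AddCommGroup V] [Module k V]
    (𝔉 : Set (Submodule k V)) : Prop :=
  IsChain (· ≤ ·) 𝔉 ∧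
  (∀ F ∈ 𝔉, (∃ G, IsImmediateSucc 𝔉 G F) ∨ (∃ G, IsImmediateSucc 𝔉 F G)) ∧
  (∀ v : V, v ≠ 0 → ∃ F' F'', IsImmediateSucc 𝔉 F' F'' ∧ v ∈ F'' ∧ v ∉ F')

/-- A maximal generalized flag. -/
def IsMaximalGeneralizedFlag {k V : Type*} [Field k] [AddCommGroup V] [Module k V]
    (𝔉 : Set (Submodule k V)) : Prop :=
  IsGeneralizedFlag 𝔉 ∧
  ∀ F' F'' : Submodule k V, IsImmediateSucc 𝔉 F' F'' →
    Module.finrank k (F'' ⧸ (F'.comap F''.subtype)) = 1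

/-- If a locally finite Lie algebra `L` with an integrable faithful module `V` stabilizes a
maximal generalized flag in `V`, then `L` is locally solvable. -/
theorem locallySolvable_of_stabilizes_maximal_flag
    {k L V : Type*} [Field k] [IsAlgClosed k] [CharZero k]
    [LieRing L] [LieAlgebra k L]
    [AddCommGroup V] [Module k V] [LieRingModule L V] [LieModule k L V]
    -- `L` is locally finite dimensional
    (hLF : ∀ s : Finset L, FiniteDimensional k (LieSubalgebra.lieSpan k L ↑s))
    -- `V` is an integrable `L`-module
    (hInt : ∀ (s : Finset V) (t : Finset L), ∃ W : Submodule k V,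
      FiniteDimensional k W ∧ (↑s : Set V) ⊆ (W : Set V) ∧
      ∀ x ∈ LieSubalgebra.lieSpan k L ↑t, ∀ w ∈ W, ⁅x, w⁆ ∈ W)
    -- `V` is a faithful `L`-module
    (hFaith : ∀ x : L, (∀ v : V, ⁅x, v⁆ = 0) → x = 0)
    -- `L` stabilizes a maximal generalized flag in `V`
    (𝔉 : Set (Submodule k V)) (hflag : IsMaximalGeneralizedFlag 𝔉)
    (hstab : ∀ x : L, ∀ F ∈ 𝔉, ∀ v ∈ F, ⁅x, v⁆ ∈ F) :
    -- `L` is locally solvable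
    ∀ s : Finset L, LieAlgebra.IsSolvable (LieSubalgebra.lieSpan k L ↑s) := by
  classical
  intro s
  set M := LieSubalgebra.lieSpan k L ↑s with hMdef
  haveI hMfd : FiniteDimensional k M := hLF s
  haveI hMfd' : FiniteDimensional k (LieSubalgebra.toSubmodule M) := hLF s
  -- Step 1: find a finite-dimensional invariant subspace on which `M` acts faithfully
  have hminex : ∃ n : ℕ, ∃ W : Submodule k V,
      (FiniteDimensional k W ∧ ∀ x ∈ M, ∀ w ∈ W, ⁅x, w⁆ ∈ W) ∧
      Module.finrank k ↥(FlagAux.kerOn (L := L) W ⊓ LieSubalgebra.toSubmodule M) = n := by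
    obtain ⟨W, h1, _, h3⟩ := hInt ∅ s
    exact ⟨_, W, ⟨h1, h3⟩, rfl⟩
  obtain ⟨W₀, ⟨hW₀fd, hW₀inv⟩, hW₀r⟩ := Nat.find_spec hminex
  have hker : ∀ x : L, x ∈ M → (∀ w ∈ W₀, ⁅x, w⁆ = 0) → x = 0 := by
    intro x hxM hx0
    by_contra hx
    obtain ⟨v, hv⟩ : ∃ v : V, ⁅x, v⁆ ≠ 0 := by
      by_contra h; push_neg at h; exact hx (hFaith x h)
    obtain ⟨T, hT⟩ : W₀.FG := (Submodule.fg_iff_finiteDimensional _).mpr hW₀fd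
    obtain ⟨W₁, hW₁fd, hW₁sub, hW₁inv⟩ := hInt (insert v T) s
    have hW₀le : W₀ ≤ W₁ := by
      rw [← hT]
      refine Submodule.span_le.mpr (fun t ht => hW₁sub ?_)
      simp only [Finset.coe_insert, Set.mem_insert_iff]
      exact Or.inr ht
    have hvW₁ : v ∈ W₁ := hW₁sub (by simp)
    have hlt : FlagAux.kerOn (L := L) W₁ ⊓ LieSubalgebra.toSubmodule M <
        FlagAux.kerOn (L := L) W₀ ⊓ LieSubalgebra.toSubmodule M := by
      refine lt_of_le_of_ne (inf_le_inf_right _ ?_) ?_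
      · intro y hy w hw; exact hy w (hW₀le hw)
      · intro heq
        have hxin : x ∈ FlagAux.kerOn (L := L) W₀ ⊓ LieSubalgebra.toSubmodule M :=
          ⟨hx0, hxM⟩
        rw [← heq] at hxin
        exact hv (hxin.1 v hvW₁)
    haveI : FiniteDimensional k
        ↥(FlagAux.kerOn (L := L) W₀ ⊓ LieSubalgebra.toSubmodule M) :=
      Submodule.finiteDimensional_of_le inf_le_right
    have hrlt := Submodule.finrank_lt_finrank_of_lt hlt
    rw [hW₀r] at hrlt
    exact Nat.find_min hminex hrlt ⟨W₁, ⟨hW₁fd, hW₁inv⟩, rfl⟩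
  clear hW₀r hminex
  -- Step 2: the filtration machine
  set N := Module.finrank k ↥W₀ with hNdef
  set U : ℕ → Submodule k V := fun m =>
    sSup {G | ∃ F, F ∈ 𝔉 ∧ G = F ⊓ W₀ ∧ Module.finrank k ↥(F ⊓ W₀) ≤ m} with hUdef
  have hU1 : ∀ m : ℕ, ∀ u ∈ U m, u = 0 ∨
      ∃ F₀, F₀ ∈ 𝔉 ∧ u ∈ F₀ ∧ u ∈ W₀ ∧ Module.finrank k ↥(F₀ ⊓ W₀) ≤ m := by
    intro m u hu
    by_cases hex : ∃ F, F ∈ 𝔉 ∧ Module.finrank k ↥(F ⊓ W₀) ≤ m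
    · obtain ⟨F₁, hF₁, hF₁r⟩ := hex
      set P : ℕ → Prop := fun j =>
        ∃ F, F ∈ 𝔉 ∧ Module.finrank k ↥(F ⊓ W₀) ≤ m ∧
          Module.finrank k ↥(F ⊓ W₀) = j with hPdef
      have hP₁ : P (Module.finrank k ↥(F₁ ⊓ W₀)) := ⟨F₁, hF₁, hF₁r, rfl⟩
      obtain ⟨F₀, hF₀, hF₀m, hF₀j⟩ := Nat.findGreatest_spec (P := P) hF₁r hP₁
      have hmax : ∀ F, F ∈ 𝔉 → Module.finrank k ↥(F ⊓ W₀) ≤ m →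
          Module.finrank k ↥(F ⊓ W₀) ≤ Module.finrank k ↥(F₀ ⊓ W₀) := by
        intro F hF hFr
        rw [hF₀j]
        exact Nat.le_findGreatest hFr ⟨F, hF, hFr, rfl⟩
      have hUle : U m ≤ F₀ ⊓ W₀ := by
        refine sSup_le ?_
        rintro G ⟨F, hF, rfl, hFr⟩
        rcases hflag.1.1.total hF hF₀ with h | h
        · exact inf_le_inf_right _ h
        · haveI : FiniteDimensional k ↥(F ⊓ W₀) :=
            Submodule.finiteDimensional_of_le inf_le_right
          have heq : F₀ ⊓ W₀ = F ⊓ W₀ :=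
            Submodule.eq_of_le_of_finrank_le (inf_le_inf_right _ h) (hmax F hF hFr)
          rw [← heq]
      have hu' := hUle hu
      by_cases h0 : u = 0
      · exact Or.inl h0
      · exact Or.inr ⟨F₀, hF₀, hu'.1, hu'.2, hF₀m⟩
    · left
      have hle : U m ≤ ⊥ := by
        refine sSup_le ?_
        rintro G ⟨F, hF, rfl, hFr⟩
        exact absurd ⟨F, hF, hFr⟩ hex
      simpa using hle hu
  -- membership in `U`
  have hUmem : ∀ (m : ℕ) (F : Submodule k V), F ∈ 𝔉 →
      Module.finrank k ↥(F ⊓ W₀) ≤ m → F ⊓ W₀ ≤ U m := by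
    intro m F hF hFr
    exact le_sSup ⟨F, hF, rfl, hFr⟩
  have hUW : ∀ w ∈ W₀, w ∈ U N := by
    intro w hw
    by_cases h0 : w = 0
    · subst h0; exact (U N).zero_mem
    · obtain ⟨F', F'', hpair, hw'', hw'⟩ := hflag.1.2.2 w h0
      refine hUmem N F'' hpair.2.1 ?_ ⟨hw'', hw⟩
      exact Submodule.finrank_mono inf_le_right
  -- the basic one-step drop
  have hD1 : ∀ x y : L, x ∈ M → y ∈ M → ∀ m, ∀ u ∈ U m, ⁅⁅x, y⁆, u⁆ ∈ U (m - 1) := by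
    intro x y hx hy m u hu
    rcases hU1 m u hu with rfl | ⟨F₀, hF₀, huF₀, huW₀, hFr⟩
    · simp
    by_cases h0 : u = 0
    · subst h0; simp
    obtain ⟨F', F'', hpair, hu'', hu'⟩ := hflag.1.2.2 u h0
    have hle : F'' ≤ F₀ := FlagAux.succ_le_of_mem hflag.1.1 hpair hF₀ huF₀ hu'
    have hq := hflag.2 F' F'' hpair
    have hmem' : ⁅⁅x, y⁆, u⁆ ∈ F' :=
      FlagAux.comm_mem F' F'' hq x y (hstab x F' hpair.1) (hstab x F'' hpair.2.1)
        (hstab y F' hpair.1) (hstab y F'' hpair.2.1) u hu''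
    have hmemW : ⁅⁅x, y⁆, u⁆ ∈ W₀ := by
      rw [lie_lie]
      exact W₀.sub_mem (hW₀inv x hx _ (hW₀inv y hy u huW₀))
        (hW₀inv y hy _ (hW₀inv x hx u huW₀))
    haveI : FiniteDimensional k ↥(F₀ ⊓ W₀) :=
      Submodule.finiteDimensional_of_le inf_le_right
    haveI : FiniteDimensional k ↥(F'' ⊓ W₀) :=
      Submodule.finiteDimensional_of_le inf_le_right
    have h1 : F' ⊓ W₀ < F'' ⊓ W₀ := by
      refine lt_of_le_of_ne (inf_le_inf_right _ hpair.2.2.1.le) ?_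
      intro heq
      exact hu' (heq.symm ▸ (⟨hu'', huW₀⟩ : u ∈ F'' ⊓ W₀) : u ∈ F' ⊓ W₀).1
    have h2 : Module.finrank k ↥(F' ⊓ W₀) < Module.finrank k ↥(F'' ⊓ W₀) :=
      Submodule.finrank_lt_finrank_of_lt h1
    have h3 : Module.finrank k ↥(F'' ⊓ W₀) ≤ Module.finrank k ↥(F₀ ⊓ W₀) :=
      Submodule.finrank_mono (inf_le_inf_right _ hle)
    exact hUmem (m - 1) F' hpair.1 (by omega) ⟨hmem', hmemW⟩
  -- the main induction on the derived series
  have main : ∀ n, ∀ z : M, z ∈ LieAlgebra.derivedSeries k M (n + 1) →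
      ∀ m, ∀ u ∈ U m, ⁅(z : L), u⁆ ∈ U (m - 2 ^ n) := by
    intro n
    induction n with
    | zero =>
      intro z hz
      rw [LieAlgebra.derivedSeries_def, LieAlgebra.derivedSeriesOfIdeal_succ,
        LieAlgebra.derivedSeriesOfIdeal_zero] at hz
      have hz' : z ∈ Submodule.span k
          {m : M | ∃ x ∈ (⊤ : LieIdeal k M), ∃ n ∈ (⊤ : LieIdeal k M), ⁅x, n⁆ = m} := by
        rw [← LieSubmodule.lieIdeal_oper_eq_linear_span']
        exact hz
      refine Submodule.span_induction ?_ ?_ ?_ ?_ hz'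
      · rintro w ⟨a, -, b, -, rfl⟩ m u hu
        have hco : ((⁅a, b⁆ : M) : L) = ⁅(a : L), (b : L)⁆ := rfl
        rw [hco]
        have := hD1 (a : L) (b : L) a.2 b.2 m u hu
        simpa [pow_zero] using this
      · intro m u hu; simp
      · intro z₁ z₂ hz₁ hz₂ ih₁ ih₂ m u hu
        have hco : ((z₁ + z₂ : M) : L) = (z₁ : L) + (z₂ : L) := rfl
        rw [hco, add_lie]
        exact (U (m - 2 ^ 0)).add_mem (ih₁ m u hu) (ih₂ m u hu)
      · intro c z₁ hz₁ ih m u hu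
        have hco : ((c • z₁ : M) : L) = c • (z₁ : L) := rfl
        rw [hco, smul_lie]
        exact (U (m - 2 ^ 0)).smul_mem _ (ih m u hu)
    | succ n ih =>
      intro z hz
      rw [LieAlgebra.derivedSeries_def, LieAlgebra.derivedSeriesOfIdeal_succ,
        ← LieAlgebra.derivedSeries_def] at hz
      have hz' : z ∈ Submodule.span k
          {m : M | ∃ x ∈ LieAlgebra.derivedSeries k M (n + 1),
            ∃ y ∈ LieAlgebra.derivedSeries k M (n + 1), ⁅x, y⁆ = m} := by
        rw [← LieSubmodule.lieIdeal_oper_eq_linear_span']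
        exact hz
      refine Submodule.span_induction ?_ ?_ ?_ ?_ hz'
      · rintro w ⟨a, ha, b, hb, rfl⟩ m u hu
        have hco : ((⁅a, b⁆ : M) : L) = ⁅(a : L), (b : L)⁆ := rfl
        rw [hco, lie_lie]
        have h1 : ⁅(a : L), ⁅(b : L), u⁆⁆ ∈ U (m - 2 ^ n - 2 ^ n) :=
          ih a ha _ _ (ih b hb m u hu)
        have h2 : ⁅(b : L), ⁅(a : L), u⁆⁆ ∈ U (m - 2 ^ n - 2 ^ n) :=
          ih b hb _ _ (ih a ha m u hu)
        have he : m - 2 ^ n - 2 ^ n = m - 2 ^ (n + 1) := by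
          rw [pow_succ]; omega
        rw [← he]
        exact (U (m - 2 ^ n - 2 ^ n)).sub_mem h1 h2
      · intro m u hu; simp
      · intro z₁ z₂ hz₁ hz₂ ih₁ ih₂ m u hu
        have hco : ((z₁ + z₂ : M) : L) = (z₁ : L) + (z₂ : L) := rfl
        rw [hco, add_lie]
        exact (U (m - 2 ^ (n + 1))).add_mem (ih₁ m u hu) (ih₂ m u hu)
      · intro c z₁ hz₁ ih' m u hu
        have hco : ((c • z₁ : M) : L) = c • (z₁ : L) := rfl
        rw [hco, smul_lie]
        exact (U (m - 2 ^ (n + 1))).smul_mem _ (ih' m u hu)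
  -- conclude
  have hNfin : LieAlgebra.derivedSeries k M (N + 1) = ⊥ := by
    rw [LieSubmodule.eq_bot_iff]
    intro z hz
    have h0 : ∀ w ∈ W₀, ⁅(z : L), w⁆ = 0 := by
      intro w hw
      have hm := main N z hz N w (hUW w hw)
      have hz0 : N - 2 ^ N = 0 := by
        have := Nat.lt_two_pow_self (n := N); omega
      rw [hz0] at hm
      rcases hU1 0 _ hm with h | ⟨F₀, hF₀, h1, h2, h3⟩
      · exact h
      · haveI : FiniteDimensional k ↥(F₀ ⊓ W₀) :=
          Submodule.finiteDimensional_of_le inf_le_right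
        have hbot : (F₀ ⊓ W₀ : Submodule k V) = ⊥ :=
          Submodule.finrank_eq_zero.mp (Nat.le_zero.mp h3)
        have : ⁅(z : L), w⁆ ∈ (⊥ : Submodule k V) := hbot ▸ (⟨h1, h2⟩ : _ ∈ F₀ ⊓ W₀)
        simpa using this
    have hz0 : (z : L) = 0 := hker _ z.2 h0
    exact (LieSubalgebra.coe_zero_iff_zero _ _).mp hz0
  exact (LieAlgebra.isSolvable_iff k _).mpr ⟨N + 1, hNfin⟩
end

section
/- Let k be an algebraically closed field of characteristic zero, let B be a locally solvable Lie algebra over k, and let V be an integrable B-module. Then B stabilizes some maximal generalized flag in V; that is, there exists a maximal generalized flag 𝔉 in V such that x·F ⊆ F for all x ∈ B and all F ∈ 𝔉. -/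
set_option linter.unusedSectionVars false
set_option linter.unusedVariables false
set_option maxHeartbeats 1000000

open Module Submodule

attribute [local instance 100] LieRing.ofAssociativeRing

universe u v w

section TraceLemma

variable {k : Type*} [Field k] {M : Type*} [AddCommGroup M] [Module k M]

lemma trace_restrict_triangular
    {n : ℕ} {ee : Fin n → M} (li : LinearIndependent k ee)
    (h : M →ₗ[k] M) (c : k)
    (hinv : ∀ m ∈ span k (Set.range ee), h m ∈ span k (Set.range ee))
    (htri : ∀ i : Fin n, h (ee i) - c • ee i ∈ span k (ee '' {j | j < i})) :
    LinearMap.trace k (span k (Set.range ee)) (h.restrict hinv) = n • c := by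
  classical
  set O : Submodule k M := span k (Set.range ee) with hO
  let b : Basis (Fin n) k O := Basis.span li
  have hb : ∀ i, (b i : M) = ee i := fun i => congrArg Subtype.val (Basis.span_apply li i)
  -- key: repr vanishing on lower spans
  have hrepr : ∀ (i : Fin n) (x : O), (x : M) ∈ span k (ee '' {j | j < i}) → b.repr x i = 0 := by
    intro i x hx
    have himg : ee '' {j | j < i} = O.subtype '' (⇑b '' {j | j < i}) := by
      rw [Set.image_image]
      apply Set.image_congr
      intro j _
      exact (hb j).symm
    rw [himg, ← Submodule.map_span] at hx
    obtain ⟨y, hy, hyx⟩ := hx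
    have hxy : y = x := Subtype.ext hyx
    subst hxy
    -- now y ∈ span of b '' {j < i}; show repr at i is 0
    have : span k (⇑b '' {j | j < i}) ≤ LinearMap.ker (b.coord i) := by
      rw [span_le]
      rintro _ ⟨j, hj, rfl⟩
      simp only [SetLike.mem_coe, LinearMap.mem_ker, Basis.coord_apply, Basis.repr_self]
      rw [Finsupp.single_apply]
      simp only [ite_eq_right_iff]
      intro hji; exact absurd hji (ne_of_lt hj)
    have := this hy
    simpa using this
  have htr := LinearMap.trace_eq_matrix_trace k b (h.restrict hinv)
  rw [htr]
  rw [Matrix.trace]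
  have hdiag : ∀ i, Matrix.diag (LinearMap.toMatrix b b (h.restrict hinv)) i = c := by
    intro i
    have hmem : h (ee i) - c • ee i ∈ O := by
      refine span_le.mpr ?_ (htri i)
      exact Set.Subset.trans (Set.image_subset_range _ _) subset_span |>.trans (le_refl _)
    have : (h.restrict hinv) (b i) = c • b i + ⟨h (ee i) - c • ee i, hmem⟩ := by
      apply Subtype.ext
      simp only [LinearMap.restrict_apply, Submodule.coe_add, SetLike.val_smul, hb]
      abel
    rw [Matrix.diag, LinearMap.toMatrix_apply, this]
    rw [map_add, map_smul]
    rw [Finsupp.add_apply, Finsupp.smul_apply]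
    rw [hrepr i ⟨h (ee i) - c • ee i, hmem⟩ (htri i)]
    simp [Basis.repr_self, Finsupp.single_apply]
  rw [Finset.sum_congr rfl (fun i _ => hdiag i)]
  simp [Finset.card_univ, mul_comm, nsmul_eq_mul]

end TraceLemma

section LieTheorem

variable {k : Type u} [Field k] [CharZero k]

lemma lam_bracket_eq_zero {L : Type v} [LieRing L] [LieAlgebra k L]
    {M : Type w} [AddCommGroup M] [Module k M] [FiniteDimensional k M]
    [LieRingModule L M] [LieModule k L M]
    (A : LieIdeal k L) (lam : A → k) (w : M) (hw : w ≠ 0)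
    (hweig : ∀ a : A, ⁅(a : L), w⁆ = lam a • w) (z : L) (a : A)
    (hb : ⁅(a : L), z⁆ ∈ A) :
    lam ⟨⁅(a : L), z⁆, hb⟩ = 0 := by
  classical
  set f : Module.End k M := LieModule.toEnd k L M z with hf
  set g : A → Module.End k M := fun aa => LieModule.toEnd k L M (aa : L) with hg
  set e : ℕ → M := fun i => (f ^ i) w with he
  have he0 : e 0 = w := by simp [he]
  have hes : ∀ i, e (i + 1) = f (e i) := by
    intro i
    show (f ^ (i + 1)) w = f ((f ^ i) w)
    rw [pow_succ']
    rfl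
  set U : ℕ → Submodule k M := fun n => span k (e '' Set.Iio n) with hU
  have hUmono : Monotone U := fun m n hmn =>
    span_mono (Set.image_mono (fun x hx => lt_of_lt_of_le hx hmn))
  have hUsucc : ∀ n, U n ≤ U (n + 1) := fun n => hUmono (Nat.le_succ n)
  have heU : ∀ n, e n ∈ U (n + 1) := fun n => subset_span ⟨n, Nat.lt_succ_self n, rfl⟩
  have hfU : ∀ n, ∀ m ∈ U n, f m ∈ U (n + 1) := by
    intro n m hm
    have hmap : Submodule.map f (U n) ≤ U (n + 1) := by
      rw [hU, Submodule.map_span, span_le]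
      rintro _ ⟨_, ⟨i, hi, rfl⟩, rfl⟩
      exact subset_span ⟨i + 1, Nat.succ_lt_succ hi, hes i⟩
    exact hmap ⟨m, hm, rfl⟩
  have hcomm : ∀ aa : A, LieModule.toEnd k L M ⁅(aa : L), z⁆ = g aa * f - f * g aa := by
    intro aa
    rw [LieHom.map_lie]
    rw [Ring.lie_def]
  have hgapp : ∀ (aa : A) (m : M), g aa m = ⁅(aa : L), m⁆ := fun aa m => rfl
  have htri : ∀ (n : ℕ) (aa : A), g aa (e n) - lam aa • e n ∈ U n := by
    intro n
    induction n with
    | zero =>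
      intro aa
      have h1 : g aa (e 0) = lam aa • e 0 := by rw [he0, hgapp]; exact hweig aa
      rw [h1, sub_self]
      exact Submodule.zero_mem _
    | succ n ih =>
      intro aa
      have hbb : ⁅(aa : L), z⁆ ∈ A := lie_mem_left k L A (aa : L) z aa.2
      set bb : A := ⟨⁅(aa : L), z⁆, hbb⟩ with hbbdef
      have hstep : g aa (e (n + 1)) = f (g aa (e n)) + g bb (e n) := by
        have h2 := congrFun (congrArg DFunLike.coe (hcomm aa)) (e n)
        simp only [LinearMap.sub_apply, Module.End.mul_apply] at h2
        have h3 : g bb (e n) = g aa (f (e n)) - f (g aa (e n)) := h2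
        rw [hes n, h3]
        abel
      have key : g aa (e (n + 1)) - lam aa • e (n + 1) =
          f (g aa (e n) - lam aa • e n) + ((g bb (e n) - lam bb • e n) + lam bb • e n) := by
        rw [hstep, hes n, map_sub, map_smul]
        abel
      rw [key]
      exact add_mem (hfU n _ (ih aa)) (add_mem (hUsucc n (ih bb))
        (Submodule.smul_mem _ _ (heU n)))
  have hex : ∃ n, e n ∈ U n := by
    by_contra hcon
    push_neg at hcon
    have hstrict : ∀ n, U n < U (n + 1) := by
      intro n
      refine lt_of_le_of_ne (hUsucc n) (fun hEq => hcon n ?_)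
      rw [hEq]
      exact heU n
    have hrank : ∀ n, n ≤ finrank k (U n) := by
      intro n
      induction n with
      | zero => exact Nat.zero_le _
      | succ n ih =>
        exact Nat.succ_le_of_lt (lt_of_le_of_lt ih (Submodule.finrank_lt_finrank_of_lt (hstrict n)))
    have h1 := hrank (finrank k M + 1)
    have h2 := Submodule.finrank_le (U (finrank k M + 1))
    omega
  set n₀ := Nat.find hex with hn₀
  have hkey : e n₀ ∈ U n₀ := Nat.find_spec hex
  have hmin : ∀ i, i < n₀ → e i ∉ U i := fun i hi => Nat.find_min hex hi
  have hn₀pos : 0 < n₀ := by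
    rcases Nat.eq_zero_or_pos n₀ with h0 | h
    · exfalso
      rw [h0] at hkey
      have hU0 : U 0 = ⊥ := by
        have h1 : e '' Set.Iio (0 : ℕ) = ∅ := by
          have : Set.Iio (0 : ℕ) = ∅ := by ext i; simp
          rw [this, Set.image_empty]
        show span k (e '' Set.Iio 0) = ⊥
        rw [h1, span_empty]
      rw [hU0, Submodule.mem_bot, he0] at hkey
      exact hw hkey
    · exact h
  set ee : Fin n₀ → M := fun i => e i with hee
  have hrange' : ∀ m : ℕ, Set.range (fun i : Fin m => e ↑i) = e '' Set.Iio m := by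
    intro m
    ext x
    constructor
    · rintro ⟨i, rfl⟩; exact ⟨i, i.2, rfl⟩
    · rintro ⟨i, hi, rfl⟩; exact ⟨⟨i, hi⟩, rfl⟩
  have hUO : U n₀ = span k (Set.range ee) := by rw [hU, hee, hrange']
  have li : LinearIndependent k ee := by
    have main : ∀ m, m ≤ n₀ → LinearIndependent k (fun i : Fin m => e ↑i) := by
      intro m
      induction m with
      | zero => intro _; exact linearIndependent_empty_type
      | succ m ih =>
        intro hm
        have hm' : m < n₀ := Nat.lt_of_succ_le hm
        have hsnoc : (fun i : Fin (m + 1) => e ↑i) = Fin.snoc (fun i : Fin m => e ↑i) (e m) := by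
          funext i
          refine Fin.lastCases ?_ ?_ i
          · simp [Fin.snoc_last]
          · intro j; simp [Fin.snoc_castSucc]
        rw [hsnoc, linearIndependent_fin_snoc]
        refine ⟨ih (le_of_lt hm'), ?_⟩
        rw [hrange' m]
        exact hmin m hm'
    exact main n₀ le_rfl
  have hUfix : U (n₀ + 1) ≤ U n₀ := by
    rw [hU, span_le]
    rintro _ ⟨i, hi, rfl⟩
    rcases Nat.lt_succ_iff_lt_or_eq.mp hi with hi' | rfl
    · exact subset_span ⟨i, hi', rfl⟩
    · exact hkey
  have hfInv : ∀ m ∈ span k (Set.range ee), f m ∈ span k (Set.range ee) := by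
    rw [← hUO]
    intro m hm
    exact hUfix (hfU n₀ m hm)
  have hgInv : ∀ aa : A, ∀ m ∈ span k (Set.range ee), g aa m ∈ span k (Set.range ee) := by
    intro aa m hm
    rw [← hUO] at hm ⊢
    induction hm using Submodule.span_induction with
    | mem x hx =>
      obtain ⟨i, hi, rfl⟩ := hx
      have h1 : g aa (e i) = (g aa (e i) - lam aa • e i) + lam aa • e i := by abel
      rw [h1]
      exact add_mem (hUmono (le_of_lt hi) (htri i aa))
        (Submodule.smul_mem _ _ (subset_span ⟨i, hi, rfl⟩))
    | zero => simp
    | add x y _ _ hx hy => rw [map_add]; exact add_mem hx hy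
    | smul c x _ hx => rw [map_smul]; exact Submodule.smul_mem _ _ hx
  have htri' : ∀ (aa : A) (i : Fin n₀), g aa (ee i) - lam aa • ee i ∈ span k (ee '' {j | j < i}) := by
    intro aa i
    have h1 : U (i : ℕ) ≤ span k (ee '' {j | j < i}) := by
      rw [hU, span_le]
      rintro _ ⟨jm, hjm, rfl⟩
      exact subset_span ⟨⟨jm, lt_trans hjm i.2⟩, hjm, rfl⟩
    exact h1 (htri i aa)
  have tr_eq : ∀ aa : A,
      LinearMap.trace k _ ((g aa).restrict (hgInv aa)) = n₀ • lam aa :=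
    fun aa => trace_restrict_triangular li (g aa) (lam aa) (hgInv aa) (htri' aa)
  set bb : A := ⟨⁅(a : L), z⁆, hb⟩ with hbbdef
  have hrestr : (g bb).restrict (hgInv bb) =
      ((g a).restrict (hgInv a)) * (f.restrict hfInv)
        - (f.restrict hfInv) * ((g a).restrict (hgInv a)) := by
    ext x
    have h2 := congrFun (congrArg DFunLike.coe (hcomm a)) (x : M)
    simp only [LinearMap.sub_apply, Module.End.mul_apply] at h2
    simp only [LinearMap.sub_apply, Module.End.mul_apply, LinearMap.restrict_coe_apply,
      Submodule.coe_sub]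
    exact h2
  have htr0 : LinearMap.trace k _ ((g bb).restrict (hgInv bb)) = 0 := by
    rw [hrestr, map_sub, LinearMap.trace_mul_comm, sub_self]
  rw [tr_eq bb] at htr0
  have hcast : (n₀ : k) ≠ 0 := Nat.cast_ne_zero.mpr hn₀pos.ne'
  rw [nsmul_eq_mul] at htr0
  have := mul_eq_zero.mp htr0
  rcases this with h1 | h2
  · exact absurd h1 hcast
  · exact h2

theorem solvable_exists_common_eigenvector [IsAlgClosed k] :
    ∀ (n : ℕ) (L : Type v) [LieRing L] [LieAlgebra k L],
    ∀ [FiniteDimensional k L] [LieAlgebra.IsSolvable L],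
    finrank k L ≤ n →
    ∀ (M : Type w) [AddCommGroup M] [Module k M],
    ∀ [LieRingModule L M] [LieModule k L M] [FiniteDimensional k M] [Nontrivial M],
    ∃ v : M, v ≠ 0 ∧ ∀ x : L, ∃ c : k, ⁅x, v⁆ = c • v := by
  intro n
  induction n with
  | zero =>
    intro L iL1 iL2 iL3 iL4 hn M iM1 iM2 iM3 iM4 iM5 iM6
    have hzero : finrank k L = 0 := Nat.le_zero.mp hn
    haveI : Subsingleton L := finrank_zero_iff.mp hzero
    obtain ⟨v, hv⟩ := exists_ne (0 : M)
    refine ⟨v, hv, fun x => ⟨0, ?_⟩⟩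
    rw [Subsingleton.elim x 0, zero_lie, zero_smul]
  | succ n ih =>
    intro L iL1 iL2 iL3 iL4 hn M iM1 iM2 iM3 iM4 iM5 iM6
    by_cases htriv : finrank k L = 0
    · haveI : Subsingleton L := finrank_zero_iff.mp htriv
      obtain ⟨v, hv⟩ := exists_ne (0 : M)
      refine ⟨v, hv, fun x => ⟨0, ?_⟩⟩
      rw [Subsingleton.elim x 0, zero_lie, zero_smul]
    haveI : Nontrivial L := finrank_pos_iff.mp (Nat.pos_of_ne_zero htriv)
    -- the derived algebra is a proper ideal
    have hDlt : LieAlgebra.derivedSeries k L 1 < ⊤ :=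
      LieAlgebra.derivedSeries_lt_top_of_solvable k L
    set D : LieIdeal k L := LieAlgebra.derivedSeries k L 1 with hD
    obtain ⟨x₀, -, hx₀D⟩ := SetLike.exists_of_lt hDlt
    have hmkne : (Submodule.Quotient.mk x₀ : L ⧸ (D : Submodule k L)) ≠ 0 := by
      rw [Ne, Submodule.Quotient.mk_eq_zero]
      exact fun h => hx₀D h
    obtain ⟨φq, hφq⟩ : ∃ φq : Module.Dual k (L ⧸ (D : Submodule k L)),
        φq (Submodule.Quotient.mk x₀) ≠ 0 := by
      by_contra hcon
      push_neg at hcon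
      exact hmkne ((Module.forall_dual_apply_eq_zero_iff k _).mp hcon)
    set φ : L →ₗ[k] k := φq ∘ₗ (D : Submodule k L).mkQ with hφ
    have hφz : φ x₀ ≠ 0 := hφq
    have hDker : ∀ x y : L, ⁅x, y⁆ ∈ LinearMap.ker φ := by
      intro x y
      have hmem : ⁅x, y⁆ ∈ D := by
        rw [hD, LieAlgebra.derivedSeries_def, LieAlgebra.derivedSeriesOfIdeal_succ,
          LieAlgebra.derivedSeriesOfIdeal_zero]
        exact LieSubmodule.lie_mem_lie (LieSubmodule.mem_top x) (LieSubmodule.mem_top y)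
      rw [LinearMap.mem_ker, hφ, LinearMap.comp_apply]
      have : (D : Submodule k L).mkQ ⁅x, y⁆ = 0 := (Submodule.Quotient.mk_eq_zero _).mpr hmem
      rw [this, map_zero]
    set A : LieIdeal k L := { toSubmodule := LinearMap.ker φ,
                              lie_mem := fun {x m} _ => hDker x m } with hA
    have hx₀A : x₀ ∉ A := fun h => hφz h
    -- A is solvable
    haveI hAsolv : LieAlgebra.IsSolvable A := by
      refine Function.Injective.lieAlgebra_isSolvable (f := (LieIdeal.toLieSubalgebra k L A).incl) ?_
      intro x y hxy
      exact Subtype.ext (congrArg Subtype.val (Subtype.ext hxy))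
    -- A is finite dimensional
    haveI hAfd : FiniteDimensional k A :=
      FiniteDimensional.of_injective (A.incl : A →ₗ[k] L)
        (fun x y hxy => Subtype.ext hxy)
    -- finrank bound
    have hrankA : finrank k A ≤ n := by
      have h1 : LinearMap.range (A.incl : A →ₗ[k] L) = LinearMap.ker φ := by
        ext y
        constructor
        · rintro ⟨x, rfl⟩; exact x.2
        · intro hy; exact ⟨⟨y, hy⟩, rfl⟩
      have h2 : finrank k A = finrank k (LinearMap.range (A.incl : A →ₗ[k] L)) :=
        (LinearMap.finrank_range_of_inj (fun x y hxy => Subtype.ext hxy)).symm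
      have h3 : LinearMap.ker φ < ⊤ := by
        rw [lt_top_iff_ne_top]
        intro hcon
        rw [LinearMap.ker_eq_top] at hcon
        apply hφz
        rw [hcon]
        rfl
      have h4 : finrank k (LinearMap.ker φ) < finrank k L := Submodule.finrank_lt h3.ne
      rw [h1] at h2
      omega
    obtain ⟨v₀, hv₀, hv₀eig⟩ := ih A hrankA M
    set lam : A → k := fun aa => Classical.choose (hv₀eig aa) with hlamdef
    have hlam : ∀ aa : A, ⁅(aa : L), v₀⁆ = lam aa • v₀ := by
      intro aa
      exact Classical.choose_spec (hv₀eig aa)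
    -- the weight space W
    set WS : Submodule k M :=
      { carrier := {m | ∀ aa : A, ⁅(aa : L), m⁆ = lam aa • m}
        add_mem' := by
          intro p q hp hq aa
          rw [lie_add, hp aa, hq aa, smul_add]
        zero_mem' := by
          intro aa
          rw [lie_zero, smul_zero]
        smul_mem' := by
          intro c m hm aa
          rw [lie_smul, hm aa, smul_comm] } with hWS
    have hv₀W : v₀ ∈ WS := fun aa => hlam aa
    -- z-invariance of W via the trace lemma
    have hWinv : ∀ m ∈ WS, ⁅x₀, m⁆ ∈ WS := by
      intro m hm aa
      have hbmem : ⁅(aa : L), x₀⁆ ∈ A := hDker _ _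
      have hleib : ⁅(aa : L), ⁅x₀, m⁆⁆ = ⁅⁅(aa : L), x₀⁆, m⁆ + ⁅x₀, ⁅(aa : L), m⁆⁆ :=
        leibniz_lie _ _ _
      have h5 : ⁅⁅(aa : L), x₀⁆, m⁆ = lam ⟨⁅(aa : L), x₀⁆, hbmem⟩ • m := hm ⟨_, hbmem⟩
      rw [lam_bracket_eq_zero A lam v₀ hv₀ hlam x₀ aa hbmem, zero_smul] at h5
      rw [hleib, h5, hm aa, zero_add, lie_smul]
    -- eigenvector of z on W
    have hWinv' : ∀ m ∈ WS, (LieModule.toEnd k L M x₀) m ∈ WS := by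
      intro m hm
      exact hWinv m hm
    set zEnd : Module.End k WS := (LieModule.toEnd k L M x₀).restrict hWinv' with hzEnd
    haveI : Nontrivial WS := nontrivial_of_ne ⟨v₀, hv₀W⟩ 0
      (fun h => hv₀ (congrArg Subtype.val h))
    obtain ⟨μ, hμ⟩ := Module.End.exists_eigenvalue zEnd
    obtain ⟨vv, hvv⟩ := hμ.exists_hasEigenvector
    set v : M := (vv : M) with hv
    have hvne : v ≠ 0 := fun h => hvv.2 (Subtype.ext h)
    have hzv : ⁅x₀, v⁆ = μ • v := by
      have := congrArg Subtype.val hvv.apply_eq_smul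
      simpa [hzEnd, LinearMap.restrict_apply] using this
    have hvWmem : ∀ aa : A, ⁅(aa : L), v⁆ = lam aa • v := vv.2
    refine ⟨v, hvne, fun x => ?_⟩
    set c : k := φ x / φ x₀ with hc
    have haA : x - c • x₀ ∈ A := by
      show x - c • x₀ ∈ LinearMap.ker φ
      rw [LinearMap.mem_ker, map_sub, map_smul, smul_eq_mul, hc,
        div_mul_cancel₀ _ hφz, sub_self]
    refine ⟨lam ⟨x - c • x₀, haA⟩ + c * μ, ?_⟩
    have hxdecomp : x = (x - c • x₀) + c • x₀ := by abel
    calc ⁅x, v⁆ = ⁅(x - c • x₀) + c • x₀, v⁆ := by rw [← hxdecomp]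
      _ = ⁅x - c • x₀, v⁆ + c • ⁅x₀, v⁆ := by rw [add_lie, smul_lie]
      _ = lam ⟨x - c • x₀, haA⟩ • v + c • (μ • v) := by
          rw [hvWmem ⟨x - c • x₀, haA⟩, hzv]
      _ = (lam ⟨x - c • x₀, haA⟩ + c * μ) • v := by
          rw [add_smul, smul_smul]

end LieTheorem

section MainAux

variable {k B V : Type*} [Field k] [IsAlgClosed k] [CharZero k]
  [LieRing B] [LieAlgebra k B] [AddCommGroup V] [Module k V]
  [LieRingModule B V] [LieModule k B V]

def lamSet (F₁ : LieSubmodule k B V) (u : V) (t : Finset B) : Set (↥t → k) :=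
  {lam | ∃ P : Submodule k V,
      (∀ x ∈ LieSubalgebra.lieSpan k B (↑t : Set B), ∀ p ∈ P, ⁅x, p⁆ ∈ P) ∧
      (F₁ : Submodule k V) ≤ P ∧ u ∉ P ∧ ∀ i : ↥t, ⁅(i : B), u⁆ - lam i • u ∈ P}

lemma lamSet_antitone (F₁ : LieSubmodule k B V) (u : V) {t t' : Finset B} (h : t ⊆ t')
    {lam : ↥t' → k} (hlam : lam ∈ lamSet F₁ u t') :
    (fun i : ↥t => lam ⟨i.1, h i.2⟩) ∈ lamSet F₁ u t := by
  obtain ⟨P, hPinv, hPF, hPu, hPrel⟩ := hlam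
  refine ⟨P, ?_, hPF, hPu, ?_⟩
  · intro x hx
    exact hPinv x (LieSubalgebra.lieSpan_mono (by exact_mod_cast h) hx)
  · intro i
    exact hPrel ⟨i.1, h i.2⟩

lemma lamSet_finite
    (hInt : ∀ (s : Finset V) (t : Finset B), ∃ W : Submodule k V,
      FiniteDimensional k W ∧ (↑s : Set V) ⊆ (W : Set V) ∧
      ∀ x ∈ LieSubalgebra.lieSpan k B ↑t, ∀ w ∈ W, ⁅x, w⁆ ∈ W)
    (F₁ : LieSubmodule k B V) (u : V) (hu : u ∉ F₁) (t : Finset B) :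
    (lamSet F₁ u t).Finite := by
  classical
  obtain ⟨W, hWfd, hWs, hWinv⟩ := hInt {u} t
  haveI := hWfd
  have huW : u ∈ W := hWs (by simp)
  set fx : ↥t → Module.End k V := fun i => LieModule.toEnd k B V (i : B) with hfx
  have hfxW : ∀ i : ↥t, ∀ w ∈ W, fx i w ∈ W := by
    intro i w hw
    exact hWinv (i : B) (LieSubalgebra.subset_lieSpan (by exact_mod_cast i.2)) w hw
  set X : ↥t → Module.End k ↥W := fun i => (fx i).restrict (hfxW i) with hX
  set p : ↥t → Polynomial k := fun i => (X i).charpoly with hp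
  have hsub : lamSet F₁ u t ⊆ Set.pi Set.univ (fun i => {c | (p i).IsRoot c}) := by
    intro lam hlam
    obtain ⟨P, hPinv, hPF, hPu, hPrel⟩ := hlam
    intro i _
    have hcomap : P ≤ P.comap (fx i) := by
      intro q hq
      exact hPinv (i : B) (LieSubalgebra.subset_lieSpan (by exact_mod_cast i.2)) q hq
    set gq : Module.End k (V ⧸ P) := P.mapQ P (fx i) hcomap with hgq
    have hune : (Submodule.Quotient.mk u : V ⧸ P) ≠ 0 := by
      rw [Ne, Submodule.Quotient.mk_eq_zero]; exact hPu
    have heig : gq (Submodule.Quotient.mk u) = lam i • (Submodule.Quotient.mk u : V ⧸ P) := by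
      rw [hgq, Submodule.mapQ_apply]
      rw [← Submodule.Quotient.mk_smul, ← sub_eq_zero, ← Submodule.Quotient.mk_sub,
        Submodule.Quotient.mk_eq_zero]
      exact hPrel i
    have hWpoly : ∀ q : Polynomial k, ∀ w : ↥W,
        ((Polynomial.aeval (X i) q) w : V) = (Polynomial.aeval (fx i) q) (w : V) := by
      intro q
      induction q using Polynomial.induction_on' with
      | add p1 p2 h1 h2 =>
        intro w
        rw [map_add, map_add, LinearMap.add_apply, LinearMap.add_apply, Submodule.coe_add,
          h1 w, h2 w]
      | monomial m a =>
        intro w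
        rw [Polynomial.aeval_monomial, Polynomial.aeval_monomial, Module.End.mul_apply,
          Module.End.mul_apply, Module.algebraMap_end_apply, Module.algebraMap_end_apply]
        have hpow : (((X i) ^ m) w : V) = ((fx i) ^ m) (w : V) := by
          rw [hX, Module.End.pow_restrict]
          rfl
        rw [SetLike.val_smul, hpow]
    have hQpoly : ∀ q : Polynomial k, ∀ vv : V,
        (Polynomial.aeval gq q) (Submodule.Quotient.mk vv) =
          (Submodule.Quotient.mk ((Polynomial.aeval (fx i) q) vv) : V ⧸ P) := by
      intro q
      induction q using Polynomial.induction_on' with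
      | add p1 p2 h1 h2 =>
        intro vv
        rw [map_add, map_add, LinearMap.add_apply, LinearMap.add_apply, h1 vv, h2 vv,
          Submodule.Quotient.mk_add]
      | monomial m a =>
        intro vv
        rw [Polynomial.aeval_monomial, Polynomial.aeval_monomial, Module.End.mul_apply,
          Module.End.mul_apply, Module.algebraMap_end_apply, Module.algebraMap_end_apply]
        have hpow : (gq ^ m) (Submodule.Quotient.mk vv) =
            (Submodule.Quotient.mk (((fx i) ^ m) vv) : V ⧸ P) := by
          rw [hgq, ← Submodule.mapQ_pow, Submodule.mapQ_apply]
        rw [hpow, Submodule.Quotient.mk_smul]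
    have hcayley : (Polynomial.aeval (fx i) (p i)) u = 0 := by
      have hc := LinearMap.aeval_self_charpoly (X i)
      have h0 : ((Polynomial.aeval (X i) (p i)) ⟨u, huW⟩ : V) = 0 := by
        rw [hp]
        rw [hc]
        rfl
      rw [hWpoly (p i) ⟨u, huW⟩] at h0
      exact h0
    have heigpoly : (Polynomial.aeval gq (p i)) (Submodule.Quotient.mk u) =
        (p i).eval (lam i) • (Submodule.Quotient.mk u : V ⧸ P) :=
      Module.End.aeval_apply_of_hasEigenvector ⟨Module.End.mem_eigenspace_iff.mpr heig, hune⟩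
    have hzero : (p i).eval (lam i) • (Submodule.Quotient.mk u : V ⧸ P) = 0 := by
      rw [← heigpoly, hQpoly (p i) u, hcayley]
      simp
    exact (smul_eq_zero.mp hzero).resolve_right hune
  refine Set.Finite.subset (Set.Finite.pi fun i => Polynomial.finite_setOf_isRoot ?_) hsub
  exact (LinearMap.charpoly_monic (X i)).ne_zero

lemma lamSet_nonempty
    (hBsolv : ∀ s : Finset B, LieAlgebra.IsSolvable (LieSubalgebra.lieSpan k B ↑s))
    (hInt : ∀ (s : Finset V) (t : Finset B), ∃ W : Submodule k V,
      FiniteDimensional k W ∧ (↑s : Set V) ⊆ (W : Set V) ∧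
      ∀ x ∈ LieSubalgebra.lieSpan k B ↑t, ∀ w ∈ W, ⁅x, w⁆ ∈ W)
    (F₁ : LieSubmodule k B V) (u : V) (hu : u ∉ F₁) (t : Finset B) :
    (lamSet F₁ u t).Nonempty := by
  classical
  set Bt : LieSubalgebra k B := LieSubalgebra.lieSpan k B (↑t : Set B) with hBt
  haveI hsolv : LieAlgebra.IsSolvable Bt := hBsolv t
  obtain ⟨W, hWfd, hWs, hWinv⟩ := hInt {u} t
  haveI := hWfd
  have huW : u ∈ W := hWs (by simp)
  -- the quotient module Y = V / F₁, a module over B and over Bt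
  set π : V →ₗ⁅k,B⁆ V ⧸ F₁ := LieSubmodule.Quotient.mk' F₁ with hπ
  set ub : V ⧸ F₁ := π u with hub
  have hubne : ub ≠ 0 := by
    rw [hub, Ne, hπ]
    show ¬ (LieSubmodule.Quotient.mk u = 0)
    rw [LieSubmodule.Quotient.mk_eq_zero']
    exact hu
  -- the image of W in Y, a finite-dimensional Bt-invariant submodule
  set WQ : LieSubmodule k Bt (V ⧸ F₁) :=
    { toSubmodule := Submodule.map (π : V →ₗ[k] V ⧸ F₁) W
      lie_mem := by
        rintro x m ⟨w, hw, rfl⟩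
        exact ⟨⁅(x : B), w⁆, hWinv (x : B) x.2 w hw, (π.map_lie (x : B) w).symm⟩ } with hWQ
  haveI hWQfd : FiniteDimensional k WQ := by
    have : FiniteDimensional k (Submodule.map (π : V →ₗ[k] V ⧸ F₁) W) :=
      Module.Finite.map W (π : V →ₗ[k] V ⧸ F₁)
    exact this
  -- the cyclic Bt-submodule generated by ub
  set NL : LieSubmodule k Bt (V ⧸ F₁) := LieSubmodule.lieSpan k Bt {ub} with hNL
  have hubNL : ub ∈ NL := LieSubmodule.subset_lieSpan rfl
  have hNLW : NL ≤ WQ := by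
    rw [hNL, LieSubmodule.lieSpan_le]
    rintro m rfl
    exact ⟨u, huW, rfl⟩
  haveI hNLfd : FiniteDimensional k NL := by
    have h1 : FiniteDimensional k (NL : Submodule k (V ⧸ F₁)) :=
      Submodule.finiteDimensional_of_le ((LieSubmodule.toSubmodule_le_toSubmodule _ _).mpr hNLW)
    exact h1
  -- Zorn: a maximal Bt-submodule of NL avoiding ub
  set s : Set (LieSubmodule k Bt (V ⧸ F₁)) := {Q | Q ≤ NL ∧ ub ∉ Q} with hs
  have hmem_sSup : ∀ (c : Set (LieSubmodule k Bt (V ⧸ F₁))), c.Nonempty → IsChain (· ≤ ·) c →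
      ∀ {m : V ⧸ F₁}, m ∈ sSup c → ∃ Q ∈ c, m ∈ Q := by
    intro c hcne hchain m hm
    rw [← LieSubmodule.mem_toSubmodule, LieSubmodule.sSup_toSubmodule] at hm
    have hdir : DirectedOn (· ≤ ·) {p : Submodule k (V ⧸ F₁) | ∃ q ∈ c, (q : Submodule k (V ⧸ F₁)) = p} := by
      rintro _ ⟨Q1, h1, rfl⟩ _ ⟨Q2, h2, rfl⟩
      rcases hchain.total h1 h2 with h | h
      · exact ⟨Q2, ⟨Q2, h2, rfl⟩, (LieSubmodule.toSubmodule_le_toSubmodule _ _).mpr h, le_rfl⟩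
      · exact ⟨Q1, ⟨Q1, h1, rfl⟩, le_rfl, (LieSubmodule.toSubmodule_le_toSubmodule _ _).mpr h⟩
    have hne' : {p : Submodule k (V ⧸ F₁) | ∃ q ∈ c, (q : Submodule k (V ⧸ F₁)) = p}.Nonempty :=
      ⟨hcne.some, hcne.some, hcne.some_mem, rfl⟩
    obtain ⟨p, hp, hmp⟩ := (Submodule.mem_sSup_of_directed hne' hdir).mp hm
    obtain ⟨Q, hQ, rfl⟩ := hp
    exact ⟨Q, hQ, hmp⟩
  have hzorn : ∀ c ⊆ s, IsChain (· ≤ ·) c → ∀ y ∈ c, ∃ ub' ∈ s, ∀ z ∈ c, z ≤ ub' := by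
    intro c hcs hchain y hy
    refine ⟨sSup c, ⟨?_, ?_⟩, fun z hz => le_sSup hz⟩
    · exact sSup_le (fun z hz => (hcs hz).1)
    · intro hcon
      obtain ⟨Q, hQ, hmem⟩ := hmem_sSup c ⟨y, hy⟩ hchain hcon
      exact (hcs hQ).2 hmem
  obtain ⟨Pb, -, hPbmax⟩ := zorn_le_nonempty₀ s hzorn (⊥ : LieSubmodule k Bt (V ⧸ F₁))
    ⟨bot_le, by simpa using hubne⟩
  obtain ⟨hPbNL, hPbub⟩ := hPbmax.1
  -- the quotient Z = NL / Pb
  set PbL : LieSubmodule k Bt NL := LieSubmodule.comap NL.incl Pb with hPbL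
  set mkZ : NL →ₗ⁅k,Bt⁆ (NL ⧸ PbL) := LieSubmodule.Quotient.mk' PbL with hmkZ
  set uN : NL := ⟨ub, hubNL⟩ with huN
  set uZ : (NL ⧸ PbL) := mkZ uN with huZ
  have huZmem : ∀ nn : NL, mkZ nn = 0 ↔ (nn : V ⧸ F₁) ∈ Pb := by
    intro nn
    rw [hmkZ]
    show LieSubmodule.Quotient.mk nn = 0 ↔ _
    rw [LieSubmodule.Quotient.mk_eq_zero']
    rfl
  have huZne : uZ ≠ 0 := by
    rw [huZ, Ne, huZmem]
    exact hPbub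
  haveI : Nontrivial (NL ⧸ PbL) := nontrivial_of_ne uZ 0 huZne
  -- the image of Bt in End (NL ⧸ PbL)
  set ρ : Bt →ₗ⁅k⁆ Module.End k (NL ⧸ PbL) := LieModule.toEnd k Bt (NL ⧸ PbL) with hρ
  set L0 : LieSubalgebra k (Module.End k (NL ⧸ PbL)) := ρ.range with hL0
  haveI hL0solv : LieAlgebra.IsSolvable L0 := ρ.isSolvable_range
  haveI hL0fd : FiniteDimensional k L0 :=
    FiniteDimensional.of_injective (LieHom.toLinearMap L0.incl)
      (fun a b hab => Subtype.ext hab)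
  -- common eigenvector
  obtain ⟨v, hvne, hveig⟩ :=
    solvable_exists_common_eigenvector (finrank k L0) L0 le_rfl (NL ⧸ PbL)
  have hxeig : ∀ x : Bt, ∃ c : k, ⁅x, v⁆ = c • v := by
    intro x
    obtain ⟨c, hc⟩ := hveig ⟨ρ x, x, rfl⟩
    refine ⟨c, ?_⟩
    rw [← hc]
    rfl
  -- span of v is invariant
  set SpanV : LieSubmodule k Bt (NL ⧸ PbL) :=
    { toSubmodule := span k {v}
      lie_mem := by
        intro x m hm
        have hm' : m ∈ span k {v} := hm
        obtain ⟨cc, rfl⟩ := Submodule.mem_span_singleton.mp hm'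
        obtain ⟨cx, hcx⟩ := hxeig x
        show ⁅x, cc • v⁆ ∈ span k {v}
        rw [lie_smul, hcx]
        exact Submodule.smul_mem _ _ (Submodule.smul_mem _ _
          (Submodule.mem_span_singleton_self v)) } with hSpanV
  -- pull back to NL
  set T : LieSubmodule k Bt (V ⧸ F₁) := LieSubmodule.map NL.incl (LieSubmodule.comap mkZ SpanV)
    with hT
  have hTNL : T ≤ NL := by
    rintro m ⟨nn, -, rfl⟩
    exact nn.2
  have hPbT : Pb ≤ T := by
    intro p hp
    have hpNL : p ∈ NL := hPbNL hp
    refine ⟨⟨p, hpNL⟩, ?_, rfl⟩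
    show mkZ ⟨p, hpNL⟩ ∈ SpanV
    have : mkZ ⟨p, hpNL⟩ = 0 := (huZmem _).mpr hp
    rw [this]
    exact SpanV.zero_mem
  have hubT : ub ∈ T := by
    by_contra hcon
    have hTs : T ∈ s := ⟨hTNL, hcon⟩
    have hTeq : T = Pb := le_antisymm (hPbmax.2 hTs hPbT) hPbT
    obtain ⟨nn, rfl⟩ := LieSubmodule.Quotient.surjective_mk' PbL v
    have hnnT : (nn : V ⧸ F₁) ∈ T := ⟨nn, Submodule.mem_span_singleton_self _, rfl⟩
    rw [hTeq] at hnnT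
    exact hvne ((huZmem nn).mpr hnnT)
  -- so uZ lies in span of v
  have huZspan : uZ ∈ span k {v} := by
    obtain ⟨nn, hnn, hnneq⟩ := hubT
    have : nn = uN := Subtype.ext hnneq
    rw [this] at hnn
    exact hnn
  -- eigen property for uZ
  have huZeig : ∀ x : Bt, ∃ c : k, ⁅x, uZ⁆ = c • uZ := by
    intro x
    obtain ⟨c0, hc0⟩ := Submodule.mem_span_singleton.mp huZspan
    obtain ⟨cx, hcx⟩ := hxeig x
    refine ⟨cx, ?_⟩
    rw [← hc0, lie_smul, hcx, smul_comm]
  -- construct the witness P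
  set P : Submodule k V := Submodule.comap (π : V →ₗ[k] V ⧸ F₁) (Pb : Submodule k (V ⧸ F₁))
    with hP
  have hrel : ∀ x : Bt, ∃ c : k, ⁅(x : B), u⁆ - c • u ∈ P := by
    intro x
    obtain ⟨c, hc⟩ := huZeig x
    refine ⟨c, ?_⟩
    show π (⁅(x : B), u⁆ - c • u) ∈ (Pb : Submodule k (V ⧸ F₁))
    have h1 : π (⁅(x : B), u⁆ - c • u) = ⁅x, ub⁆ - c • ub := by
      have e1 : π (⁅(x : B), u⁆ - c • u) = π ⁅(x : B), u⁆ - c • π u := by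
        show (π : V →ₗ[k] V ⧸ F₁) (⁅(x : B), u⁆ - c • u)
            = (π : V →ₗ[k] V ⧸ F₁) ⁅(x : B), u⁆ - c • (π : V →ₗ[k] V ⧸ F₁) u
        rw [map_sub, map_smul]
      rw [e1, π.map_lie]
      rfl
    rw [h1]
    -- ⁅x, ub⁆ - c • ub ∈ Pb
    have h2 : ⁅x, uN⁆ - c • uN ∈ PbL := by
      have h3 : mkZ (⁅x, uN⁆ - c • uN) = 0 := by
        have e1 : mkZ (⁅x, uN⁆ - c • uN) = mkZ ⁅x, uN⁆ - c • mkZ uN := by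
          show (mkZ : ↥NL →ₗ[k] (↥NL ⧸ PbL)) (⁅x, uN⁆ - c • uN)
              = (mkZ : ↥NL →ₗ[k] (↥NL ⧸ PbL)) ⁅x, uN⁆
                - c • (mkZ : ↥NL →ₗ[k] (↥NL ⧸ PbL)) uN
          rw [map_sub, map_smul]
        rw [e1, mkZ.map_lie, ← huZ, hc, sub_self]
      have h4 := (LieSubmodule.Quotient.mk_eq_zero' (N := PbL) (m := ⁅x, uN⁆ - c • uN)).mp h3
      exact h4
    have h5 : ((⁅x, uN⁆ - c • uN : NL) : V ⧸ F₁) ∈ Pb := h2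
    have h6 : ((⁅x, uN⁆ - c • uN : NL) : V ⧸ F₁) = ⁅x, ub⁆ - c • ub := rfl
    rw [← h6]
    exact h5
  choose lamc hlamc using hrel
  refine ⟨fun i => lamc ⟨(i : B), LieSubalgebra.subset_lieSpan (by exact_mod_cast i.2)⟩, ?_⟩
  refine ⟨P, ?_, ?_, ?_, ?_⟩
  · -- invariance of P under Bt
    intro x hx p hp
    show π ⁅x, p⁆ ∈ (Pb : Submodule k (V ⧸ F₁))
    have h1 : π ⁅x, p⁆ = ⁅(⟨x, hx⟩ : Bt), π p⁆ := by
      rw [π.map_lie]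
      rfl
    rw [h1]
    exact Pb.lie_mem hp
  · -- F₁ ≤ P
    intro p hp
    show π p ∈ (Pb : Submodule k (V ⧸ F₁))
    have : π p = 0 := by
      show LieSubmodule.Quotient.mk p = 0
      rw [LieSubmodule.Quotient.mk_eq_zero']
      exact hp
    rw [this]
    exact Submodule.zero_mem _
  · -- u ∉ P
    intro hcon
    exact hPbub hcon
  · -- the eigen relations
    intro i
    exact hlamc ⟨(i : B), LieSubalgebra.subset_lieSpan (by exact_mod_cast i.2)⟩

open CategoryTheory in
lemma exists_lam_global
    (F₁ : LieSubmodule k B V) (u : V)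
    (hfin : ∀ t : Finset B, (lamSet F₁ u t).Finite)
    (hne : ∀ t : Finset B, (lamSet F₁ u t).Nonempty) :
    ∃ lam : B → k, ∀ t : Finset B, ∃ P : Submodule k V,
      (∀ x ∈ LieSubalgebra.lieSpan k B (↑t : Set B), ∀ p ∈ P, ⁅x, p⁆ ∈ P) ∧
      (F₁ : Submodule k V) ≤ P ∧ u ∉ P ∧ ∀ x ∈ t, ⁅x, u⁆ - lam x • u ∈ P := by
  classical
  let Fn : (Finset B)ᵒᵖ ⥤ Type _ :=
    { obj := fun t => ↥(lamSet F₁ u t.unop)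
      map := fun {t t'} h => TypeCat.ofHom fun lam =>
        ⟨fun i => lam.1 ⟨i.1, (leOfHom h.unop) i.2⟩,
          lamSet_antitone F₁ u (leOfHom h.unop) lam.2⟩
      map_id := by intros; rfl
      map_comp := by intros; rfl }
  haveI : ∀ j : (Finset B)ᵒᵖ, Finite (Fn.obj j) := fun j => (hfin j.unop).to_subtype
  haveI : ∀ j : (Finset B)ᵒᵖ, Nonempty (Fn.obj j) := fun j => (hne j.unop).to_subtype
  obtain ⟨σ, hσ⟩ := nonempty_sections_of_finite_inverse_system Fn
  refine ⟨fun x => (σ (Opposite.op {x})).1 ⟨x, Finset.mem_singleton_self x⟩, ?_⟩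
  intro t
  obtain ⟨P, hPinv, hPF, hPu, hPrel⟩ := (σ (Opposite.op t)).2
  refine ⟨P, hPinv, hPF, hPu, ?_⟩
  intro x hx
  have harrow : Opposite.op t ⟶ Opposite.op ({x} : Finset B) :=
    (homOfLE (Finset.singleton_subset_iff.mpr hx)).op
  have hcomp := hσ harrow
  have heval := congrFun (congrArg Subtype.val hcomp) ⟨x, Finset.mem_singleton_self x⟩
  have heval' : (σ (Opposite.op t)).1 ⟨x, hx⟩
      = (σ (Opposite.op ({x} : Finset B))).1 ⟨x, Finset.mem_singleton_self x⟩ := heval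
  show ⁅x, u⁆ - (σ (Opposite.op ({x} : Finset B))).1 ⟨x, Finset.mem_singleton_self x⟩ • u ∈ P
  rw [← heval']
  exact hPrel ⟨x, hx⟩

lemma jump_sup_span
    (F₁ F₂ : LieSubmodule k B V)
    (hsimple : ∀ G : LieSubmodule k B V, F₁ ≤ G → G ≤ F₂ → G = F₁ ∨ G = F₂)
    (hle : F₁ ≤ F₂)
    (u : V) (hu₂ : u ∈ F₂) (hu₁ : u ∉ F₁)
    (lam : B → k)
    (hlam : ∀ t : Finset B, ∃ P : Submodule k V,
      (∀ x ∈ LieSubalgebra.lieSpan k B (↑t : Set B), ∀ p ∈ P, ⁅x, p⁆ ∈ P) ∧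
      (F₁ : Submodule k V) ≤ P ∧ u ∉ P ∧ ∀ x ∈ t, ⁅x, u⁆ - lam x • u ∈ P) :
    (F₂ : Submodule k V) = (F₁ : Submodule k V) ⊔ span k {u} := by
  classical
  set fam : Finset B → Set (Submodule k V) := fun t =>
    {Q | (∀ x ∈ LieSubalgebra.lieSpan k B (↑t : Set B), ∀ q ∈ Q, ⁅x, q⁆ ∈ Q) ∧
      (F₁ : Submodule k V) ≤ Q ∧ ∀ x ∈ t, ⁅x, u⁆ - lam x • u ∈ Q} with hfam
  set St : Finset B → Submodule k V := fun t => sInf (fam t) with hSt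
  have hStfam : ∀ t, St t ∈ fam t := by
    intro t
    refine ⟨?_, ?_, ?_⟩
    · intro x hx q hq
      rw [hSt, Submodule.mem_sInf] at hq ⊢
      intro Q hQ
      exact hQ.1 x hx q (hq Q hQ)
    · intro p hp
      rw [hSt, Submodule.mem_sInf]
      intro Q hQ
      exact hQ.2.1 hp
    · intro x hx
      rw [hSt, Submodule.mem_sInf]
      intro Q hQ
      exact hQ.2.2 x hx
  have hStu : ∀ t, u ∉ St t := by
    intro t hcon
    obtain ⟨P, hPinv, hPF, hPu, hPrel⟩ := hlam t
    have hPfam : P ∈ fam t := ⟨hPinv, hPF, hPrel⟩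
    rw [hSt, Submodule.mem_sInf] at hcon
    exact hPu (hcon P hPfam)
  have hStmono : ∀ {t t' : Finset B}, t ⊆ t' → St t ≤ St t' := by
    intro t t' htt
    apply sInf_le_sInf
    intro Q hQ
    exact ⟨fun x hx q hq => hQ.1 x (LieSubalgebra.lieSpan_mono (by exact_mod_cast htt) hx) q hq,
      hQ.2.1, fun x hx => hQ.2.2 x (htt hx)⟩
  have hdirected : Directed (· ≤ ·) St := by
    intro t t'
    exact ⟨t ∪ t', hStmono Finset.subset_union_left, hStmono Finset.subset_union_right⟩
  have hmemU : ∀ {m : V}, m ∈ (⨆ t, St t) ↔ ∃ t, m ∈ St t := fun {m} =>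
    Submodule.mem_iSup_of_directed St hdirected
  have hUinv : ∀ (x : B) (q : V), q ∈ (⨆ t, St t) → ⁅x, q⁆ ∈ (⨆ t, St t) := by
    intro x q hq
    obtain ⟨t, ht⟩ := hmemU.mp hq
    refine hmemU.mpr ⟨insert x t, ?_⟩
    have h1 : St t ≤ St (insert x t) := hStmono (Finset.subset_insert x t)
    exact (hStfam (insert x t)).1 x
      (LieSubalgebra.subset_lieSpan (by exact_mod_cast Finset.mem_insert_self x t)) q (h1 ht)
  have hUu : u ∉ (⨆ t, St t) := by
    intro hcon
    obtain ⟨t, ht⟩ := hmemU.mp hcon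
    exact hStu t ht
  have hF₁U : (F₁ : Submodule k V) ≤ (⨆ t, St t) :=
    le_trans (hStfam ∅).2.1 (le_iSup St ∅)
  have hrelU : ∀ x : B, ⁅x, u⁆ - lam x • u ∈ (⨆ t, St t) := by
    intro x
    exact hmemU.mpr ⟨{x}, (hStfam {x}).2.2 x (Finset.mem_singleton_self x)⟩
  set UL : LieSubmodule k B V :=
    { toSubmodule := ⨆ t, St t
      lie_mem := fun {x m} hm => hUinv x m hm } with hUL
  have hS' := hsimple (UL ⊓ F₂) (le_inf (fun m hm => hF₁U hm) hle) inf_le_right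
  rcases hS' with hS1 | hS2
  · -- relations land in F₁
    have hrelF₁ : ∀ x : B, ⁅x, u⁆ - lam x • u ∈ F₁ := by
      intro x
      have h2 : ⁅x, u⁆ - lam x • u ∈ UL ⊓ F₂ := by
        rw [LieSubmodule.mem_inf]
        exact ⟨hrelU x, sub_mem (F₂.lie_mem hu₂) (Submodule.smul_mem (F₂ : Submodule k V) _ hu₂)⟩
      rw [hS1] at h2
      exact h2
    set G : LieSubmodule k B V :=
      { toSubmodule := (F₁ : Submodule k V) ⊔ span k {u}
        lie_mem := by
          intro x m hm
          have hm' : m ∈ (F₁ : Submodule k V) ⊔ span k {u} := hm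
          rw [Submodule.mem_sup] at hm'
          obtain ⟨p, hp, q, hq, rfl⟩ := hm'
          obtain ⟨c, rfl⟩ := Submodule.mem_span_singleton.mp hq
          show ⁅x, p + c • u⁆ ∈ (F₁ : Submodule k V) ⊔ span k {u}
          rw [lie_add, lie_smul]
          refine Submodule.add_mem _ (Submodule.mem_sup_left (F₁.lie_mem hp)) ?_
          have hsplit : c • ⁅x, u⁆ = c • (⁅x, u⁆ - lam x • u) + (c * lam x) • u := by
            rw [smul_sub, mul_smul]
            abel
          rw [hsplit]
          exact Submodule.add_mem _
            (Submodule.mem_sup_left (Submodule.smul_mem _ _ (hrelF₁ x)))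
            (Submodule.mem_sup_right (Submodule.smul_mem _ _
              (Submodule.mem_span_singleton_self u))) } with hG
    have hF₁G : F₁ ≤ G := fun m hm => Submodule.mem_sup_left hm
    have hGle : G ≤ F₂ := by
      intro m hm
      have hm' : m ∈ (F₁ : Submodule k V) ⊔ span k {u} := hm
      rw [Submodule.mem_sup] at hm'
      obtain ⟨p, hp, q, hq, rfl⟩ := hm'
      obtain ⟨c, rfl⟩ := Submodule.mem_span_singleton.mp hq
      exact F₂.add_mem (hle hp) (Submodule.smul_mem (F₂ : Submodule k V) c hu₂)
    rcases hsimple G hF₁G hGle with h | h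
    · exfalso
      have : u ∈ G := Submodule.mem_sup_right (Submodule.mem_span_singleton_self u)
      rw [h] at this
      exact hu₁ this
    · exact (congrArg LieSubmodule.toSubmodule h).symm
  · exfalso
    have h3 : u ∈ UL ⊓ F₂ := by
      rw [hS2]
      exact hu₂
    rw [LieSubmodule.mem_inf] at h3
    exact hUu h3.1

lemma finrank_quot_one {F' F'' : Submodule k V} {u : V} (hu'' : u ∈ F'') (hu' : u ∉ F')
    (h : F'' = F' ⊔ span k {u}) :
    finrank k (F'' ⧸ F'.comap F''.subtype) = 1 := by
  have hne : (Submodule.Quotient.mk (⟨u, hu''⟩ : F'') : F'' ⧸ F'.comap F''.subtype) ≠ 0 := by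
    rw [Ne, Submodule.Quotient.mk_eq_zero]
    exact fun hc => hu' hc
  refine finrank_eq_one (Submodule.Quotient.mk (⟨u, hu''⟩ : F'')) hne ?_
  intro wq
  obtain ⟨w, rfl⟩ := Submodule.Quotient.mk_surjective _ wq
  have hw : (w : V) ∈ F' ⊔ span k {u} := by rw [← h]; exact w.2
  rw [Submodule.mem_sup] at hw
  obtain ⟨p, hp, q, hq, hpq⟩ := hw
  rw [Submodule.mem_span_singleton] at hq
  obtain ⟨c, rfl⟩ := hq
  refine ⟨c, ?_⟩
  rw [← Submodule.Quotient.mk_smul, ← sub_eq_zero, ← Submodule.Quotient.mk_sub,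
    Submodule.Quotient.mk_eq_zero]
  show (c • (⟨u, hu''⟩ : F'') - w : F'').1 ∈ F'
  have : (c • (⟨u, hu''⟩ : F'') - w : F'').1 = c • u - (w : V) := rfl
  rw [this, ← hpq]
  simpa using (F'.neg_mem hp)

theorem locallySolvable_stabilizes_maximal_flag_aux
    (hBsolv : ∀ s : Finset B, LieAlgebra.IsSolvable (LieSubalgebra.lieSpan k B ↑s))
    (hInt : ∀ (s : Finset V) (t : Finset B), ∃ W : Submodule k V,
      FiniteDimensional k W ∧ (↑s : Set V) ⊆ (W : Set V) ∧
      ∀ x ∈ LieSubalgebra.lieSpan k B ↑t, ∀ w ∈ W, ⁅x, w⁆ ∈ W) :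
    ∃ 𝔉 : Set (Submodule k V), IsMaximalGeneralizedFlag 𝔉 ∧
      ∀ x : B, ∀ F ∈ 𝔉, ∀ v ∈ F, ⁅x, v⁆ ∈ F := by
  classical
  obtain ⟨C, hCmax, -⟩ :=
    IsChain.exists_maxChain (r := (· ≤ ·)) (IsChain.empty (r := (· ≤ ·))
      (α := LieSubmodule k B V))
  have hCchain : IsChain (· ≤ ·) C := hCmax.1
  -- membership from comparability
  have hmemC : ∀ G : LieSubmodule k B V, (∀ A ∈ C, A ≤ G ∨ G ≤ A) → G ∈ C := by
    intro G hG
    by_contra hGC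
    have hchain : IsChain (· ≤ ·) (insert G C) :=
      hCchain.insert (fun A hA _ => (hG A hA).symm)
    have heq := hCmax.2 hchain (Set.subset_insert G C)
    apply hGC
    rw [heq]
    exact Set.mem_insert G C
  -- closure under sSup and sInf
  have hsSupC : ∀ S ⊆ C, sSup S ∈ C := by
    intro S hS
    apply hmemC
    intro A hA
    by_cases hcase : ∀ s ∈ S, s ≤ A
    · exact Or.inr (sSup_le hcase)
    · push_neg at hcase
      obtain ⟨s, hsS, hsA⟩ := hcase
      rcases hCchain.total (hS hsS) hA with h | h
      · exact absurd h hsA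
      · exact Or.inl (le_trans h (le_sSup hsS))
  have hsInfC : ∀ S ⊆ C, sInf S ∈ C := by
    intro S hS
    apply hmemC
    intro A hA
    by_cases hcase : ∀ s ∈ S, A ≤ s
    · exact Or.inl (le_sInf hcase)
    · push_neg at hcase
      obtain ⟨s, hsS, hAs⟩ := hcase
      rcases hCchain.total (hS hsS) hA with h | h
      · exact Or.inr (le_trans (sInf_le hsS) h)
      · exact absurd h hAs
  -- jumps separating nonzero vectors
  have hpair : ∀ v : V, v ≠ 0 → ∃ Fl Fu : LieSubmodule k B V,
      Fl ∈ C ∧ Fu ∈ C ∧ Fl < Fu ∧ v ∈ Fu ∧ v ∉ Fl ∧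
      (∀ A ∈ C, ¬(Fl < A ∧ A < Fu)) ∧
      (∀ A ∈ C, v ∉ A → A ≤ Fl) ∧ (∀ A ∈ C, v ∈ A → Fu ≤ A) := by
    intro v hv
    have hFlC : sSup {A | A ∈ C ∧ v ∉ A} ∈ C := hsSupC _ (fun A hA => hA.1)
    have hFuC : sInf {A | A ∈ C ∧ v ∈ A} ∈ C := hsInfC _ (fun A hA => hA.1)
    have hvFu : v ∈ sInf {A | A ∈ C ∧ v ∈ A} := by
      rw [← LieSubmodule.mem_toSubmodule, LieSubmodule.sInf_toSubmodule,
        Submodule.mem_sInf]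
      rintro _ ⟨A, hA, rfl⟩
      exact hA.2
    have hvFl : v ∉ sSup {A | A ∈ C ∧ v ∉ A} := by
      intro hcon
      rcases Set.eq_empty_or_nonempty {A : LieSubmodule k B V | A ∈ C ∧ v ∉ A} with hemp | hne
      · rw [hemp, sSup_empty] at hcon
        rw [LieSubmodule.mem_bot] at hcon
        exact hv hcon
      · rw [← LieSubmodule.mem_toSubmodule, LieSubmodule.sSup_toSubmodule] at hcon
        have hdir : DirectedOn (· ≤ ·)
            {p : Submodule k V | ∃ q ∈ {A : LieSubmodule k B V | A ∈ C ∧ v ∉ A},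
              (q : Submodule k V) = p} := by
          rintro _ ⟨Q1, h1, rfl⟩ _ ⟨Q2, h2, rfl⟩
          rcases hCchain.total h1.1 h2.1 with h | h
          · exact ⟨Q2, ⟨Q2, h2, rfl⟩,
              (LieSubmodule.toSubmodule_le_toSubmodule _ _).mpr h, le_rfl⟩
          · exact ⟨Q1, ⟨Q1, h1, rfl⟩, le_rfl,
              (LieSubmodule.toSubmodule_le_toSubmodule _ _).mpr h⟩
        have hne' : {p : Submodule k V | ∃ q ∈ {A : LieSubmodule k B V | A ∈ C ∧ v ∉ A},
            (q : Submodule k V) = p}.Nonempty := ⟨hne.some, hne.some, hne.some_mem, rfl⟩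
        obtain ⟨p, hp, hmp⟩ := (Submodule.mem_sSup_of_directed hne' hdir).mp hcon
        obtain ⟨Q, hQ, rfl⟩ := hp
        exact hQ.2 hmp
    have hle : sSup {A | A ∈ C ∧ v ∉ A} ≤ sInf {A | A ∈ C ∧ v ∈ A} := by
      apply sSup_le
      intro A hA
      apply le_sInf
      intro A' hA'
      rcases hCchain.total hA.1 hA'.1 with h | h
      · exact h
      · exact absurd (h hA'.2) hA.2
    refine ⟨_, _, hFlC, hFuC, lt_of_le_of_ne hle (fun hEq => hvFl (hEq ▸ hvFu)),
      hvFu, hvFl, ?_, ?_, ?_⟩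
    · rintro A hAC ⟨h1, h2⟩
      by_cases hvA : v ∈ A
      · exact absurd (sInf_le (show A ∈ {A : LieSubmodule k B V | A ∈ C ∧ v ∈ A} from
          ⟨hAC, hvA⟩)) (not_le_of_gt h2)
      · exact absurd (le_sSup (show A ∈ {A : LieSubmodule k B V | A ∈ C ∧ v ∉ A} from
          ⟨hAC, hvA⟩)) (not_le_of_gt h1)
    · intro A hAC hvA
      exact le_sSup ⟨hAC, hvA⟩
    · intro A hAC hvA
      exact sInf_le ⟨hAC, hvA⟩
  -- the set D of jump endpoints, and the flag
  set CImm : LieSubmodule k B V → LieSubmodule k B V → Prop := fun G A =>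
    G ∈ C ∧ A ∈ C ∧ G < A ∧ ∀ X ∈ C, ¬(G < X ∧ X < A) with hCImmDef
  set D : Set (LieSubmodule k B V) :=
    {A | A ∈ C ∧ ((∃ G, CImm G A) ∨ (∃ G, CImm A G))} with hDdef
  refine ⟨(fun A : LieSubmodule k B V => (A : Submodule k V)) '' D, ⟨⟨?_, ?_, ?_⟩, ?_⟩, ?_⟩
  · -- chain
    rintro _ ⟨A, hA, rfl⟩ _ ⟨A', hA', rfl⟩ _
    rcases hCchain.total hA.1 hA'.1 with h | h
    · exact Or.inl ((LieSubmodule.toSubmodule_le_toSubmodule _ _).mpr h)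
    · exact Or.inr ((LieSubmodule.toSubmodule_le_toSubmodule _ _).mpr h)
  · -- neighbor condition
    rintro _ ⟨A, hA, rfl⟩
    have himm : ∀ {G A' : LieSubmodule k B V}, CImm G A' →
        IsImmediateSucc ((fun A : LieSubmodule k B V => (A : Submodule k V)) '' D)
          (G : Submodule k V) (A' : Submodule k V) := by
      rintro G A' ⟨hGC, hA'C, hGA, hbet⟩
      refine ⟨⟨G, ⟨hGC, Or.inr ⟨A', hGC, hA'C, hGA, hbet⟩⟩, rfl⟩,
        ⟨A', ⟨hA'C, Or.inl ⟨G, hGC, hA'C, hGA, hbet⟩⟩, rfl⟩,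
        lt_of_le_of_ne ((LieSubmodule.toSubmodule_le_toSubmodule _ _).mpr hGA.le)
          (fun hEq => hGA.ne (LieSubmodule.toSubmodule_injective hEq)), ?_⟩
      rintro _ ⟨X, hXD, rfl⟩ ⟨h1, h2⟩
      refine hbet X hXD.1 ⟨?_, ?_⟩
      · exact lt_of_le_of_ne ((LieSubmodule.toSubmodule_le_toSubmodule _ _).mp h1.le)
          (fun hEq => h1.ne (congrArg _ hEq))
      · exact lt_of_le_of_ne ((LieSubmodule.toSubmodule_le_toSubmodule _ _).mp h2.le)
          (fun hEq => h2.ne (congrArg _ hEq))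
    rcases hA.2 with ⟨G, hG⟩ | ⟨G, hG⟩
    · exact Or.inl ⟨(G : Submodule k V), himm hG⟩
    · exact Or.inr ⟨(G : Submodule k V), himm hG⟩
  · -- separation of vectors
    intro v hv
    obtain ⟨Fl, Fu, hFlC, hFuC, hluv, hvFu, hvFl, himmv, -, -⟩ := hpair v hv
    have hCImm : CImm Fl Fu := ⟨hFlC, hFuC, hluv, himmv⟩
    refine ⟨(Fl : Submodule k V), (Fu : Submodule k V), ?_, hvFu, hvFl⟩
    refine ⟨⟨Fl, ⟨hFlC, Or.inr ⟨Fu, hCImm⟩⟩, rfl⟩, ⟨Fu, ⟨hFuC, Or.inl ⟨Fl, hCImm⟩⟩, rfl⟩,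
      lt_of_le_of_ne ((LieSubmodule.toSubmodule_le_toSubmodule _ _).mpr hluv.le)
        (fun hEq => hluv.ne (LieSubmodule.toSubmodule_injective hEq)), ?_⟩
    rintro _ ⟨X, hXD, rfl⟩ ⟨h1, h2⟩
    refine himmv X hXD.1 ⟨?_, ?_⟩
    · exact lt_of_le_of_ne ((LieSubmodule.toSubmodule_le_toSubmodule _ _).mp h1.le)
        (fun hEq => h1.ne (congrArg _ hEq))
    · exact lt_of_le_of_ne ((LieSubmodule.toSubmodule_le_toSubmodule _ _).mp h2.le)
        (fun hEq => h2.ne (congrArg _ hEq))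
  · -- maximality : dimension-one jumps
    rintro F' F'' ⟨⟨A₁, hA₁D, rfl⟩, ⟨A₂, hA₂D, rfl⟩, hltc, hbetc⟩
    have hA₁C := hA₁D.1
    have hA₂C := hA₂D.1
    have hlt12 : A₁ < A₂ :=
      lt_of_le_of_ne ((LieSubmodule.toSubmodule_le_toSubmodule _ _).mp hltc.le)
        (fun hEq => hltc.ne (congrArg _ hEq))
    -- (A₁, A₂) is a C-jump
    have hCimm12 : ∀ X ∈ C, ¬(A₁ < X ∧ X < A₂) := by
      rintro X hXC ⟨h1, h2⟩
      obtain ⟨v, hvX, hvA₁⟩ := SetLike.exists_of_lt h1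
      have hv0 : v ≠ 0 := fun h => hvA₁ (h ▸ A₁.zero_mem)
      obtain ⟨Fl, Fu, hFlC, hFuC, hluv, hvFu, hvFl, himmv, hmax1, hmin2⟩ := hpair v hv0
      have hA₁Fl : A₁ ≤ Fl := hmax1 A₁ hA₁C hvA₁
      have hFuX : Fu ≤ X := hmin2 X hXC hvX
      have hCImmv : CImm Fl Fu := ⟨hFlC, hFuC, hluv, himmv⟩
      have hFuD : Fu ∈ D := ⟨hFuC, Or.inl ⟨Fl, hCImmv⟩⟩
      apply hbetc (Fu : Submodule k V) ⟨Fu, hFuD, rfl⟩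
      constructor
      · have : A₁ < Fu := lt_of_le_of_lt hA₁Fl hluv
        exact lt_of_le_of_ne ((LieSubmodule.toSubmodule_le_toSubmodule _ _).mpr this.le)
          (fun hEq => this.ne (LieSubmodule.toSubmodule_injective hEq))
      · have : Fu < A₂ := lt_of_le_of_lt hFuX h2
        exact lt_of_le_of_ne ((LieSubmodule.toSubmodule_le_toSubmodule _ _).mpr this.le)
          (fun hEq => this.ne (LieSubmodule.toSubmodule_injective hEq))
    have hsimple : ∀ G : LieSubmodule k B V, A₁ ≤ G → G ≤ A₂ → G = A₁ ∨ G = A₂ := by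
      intro G h1 h2
      have hGC : G ∈ C := by
        apply hmemC
        intro A hA
        rcases hCchain.total hA hA₁C with hA1 | hA1
        · exact Or.inl (le_trans hA1 h1)
        · rcases hCchain.total hA hA₂C with hA2 | hA2
          · rcases eq_or_lt_of_le hA1 with heq1 | hlt1
            · exact Or.inl (heq1 ▸ h1)
            · rcases eq_or_lt_of_le hA2 with heq2 | hlt2
              · refine Or.inr ?_
                rw [heq2]
                exact h2
              · exact absurd ⟨hlt1, hlt2⟩ (hCimm12 A hA)
          · exact Or.inr (le_trans h2 hA2)
      rcases eq_or_lt_of_le h1 with heq1 | hlt1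
      · exact Or.inl heq1.symm
      · rcases eq_or_lt_of_le h2 with heq2 | hlt2
        · exact Or.inr heq2
        · exact absurd ⟨hlt1, hlt2⟩ (hCimm12 G hGC)
    obtain ⟨u, hu₂, hu₁⟩ := SetLike.exists_of_lt hlt12
    obtain ⟨lam, hlam⟩ := exists_lam_global A₁ u
      (lamSet_finite hInt A₁ u hu₁) (lamSet_nonempty hBsolv hInt A₁ u hu₁)
    have hsup := jump_sup_span A₁ A₂ hsimple hlt12.le u hu₂ hu₁ lam hlam
    exact finrank_quot_one hu₂ hu₁ hsup
  · -- invariance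
    rintro x _ ⟨A, hAD, rfl⟩ v hv
    exact A.lie_mem hv

end MainAux

/-- A locally solvable Lie algebra `B` stabilizes a maximal generalized flag in any
integrable `B`-module `V`. -/
theorem locallySolvable_stabilizes_maximal_flag
    {k B V : Type*} [Field k] [IsAlgClosed k] [CharZero k]
    [LieRing B] [LieAlgebra k B]
    [AddCommGroup V] [Module k V] [LieRingModule B V] [LieModule k B V]
    -- `B` is locally solvable
    (hBsolv : ∀ s : Finset B, LieAlgebra.IsSolvable (LieSubalgebra.lieSpan k B ↑s))
    -- `V` is an integrable `B`-module
    (hInt : ∀ (s : Finset V) (t : Finset B), ∃ W : Submodule k V,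
      FiniteDimensional k W ∧ (↑s : Set V) ⊆ (W : Set V) ∧
      ∀ x ∈ LieSubalgebra.lieSpan k B ↑t, ∀ w ∈ W, ⁅x, w⁆ ∈ W) :
    ∃ 𝔉 : Set (Submodule k V), IsMaximalGeneralizedFlag 𝔉 ∧
      ∀ x : B, ∀ F ∈ 𝔉, ∀ v ∈ F, ⁅x, v⁆ ∈ F := by
  exact locallySolvable_stabilizes_maximal_flag_aux hBsolv hInt
end
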